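/- Let R be an almost Dedekind domain and I a radical ideal of R. The following are equivalent: (i) ν_I : Max(R) → ℤ is continuous (inverse topology on Max(R), discrete topology on ℤ); (ii) V(I) ∩ Max(R) is clopen in Max(R) with the inverse topology; (iii) I is the radical of a finitely generated ideal of R. -/

import Mathlib

def AlmostDedekind (R : Type*) [CommRing R] [IsDomain R] : Prop :=
  ∀ M : MaximalSpectrum R, IsDiscreteValuationRing (Localization.AtPrime M.asIdeal)

/-- The inverse topology on the maximal spectrum. -/
def invTop (R : Type*) [CommRing R] : TopologicalSpace (MaximalSpectrum R) :=
  .generateFrom {s | ∃ I : Ideal R, I.FG ∧ s = {M | I ≤ M.asIdeal}}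

section Aux

variable {R : Type*} [CommRing R] [IsDomain R]

open Ideal TopologicalSpace

/-- In an almost Dedekind domain every nonzero prime ideal is maximal. -/
lemma AD.isMaximal_of_prime (hR : AlmostDedekind R) {P : Ideal R} (hP : P.IsPrime)
    (hP0 : P ≠ ⊥) : P.IsMaximal := by
  obtain ⟨M, hM, hle⟩ := P.exists_le_maximal hP.ne_top
  haveI : M.IsPrime := hM.isPrime
  haveI : IsDiscreteValuationRing (Localization.AtPrime M) := hR ⟨M, hM⟩
  set A := Localization.AtPrime M
  have disj : Disjoint (M.primeCompl : Set R) (P : Set R) := by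
    rw [Set.disjoint_left]
    exact fun x hx hxP => hx (hle hxP)
  have hQp : (P.map (algebraMap R A)).IsPrime :=
    IsLocalization.isPrime_of_isPrime_disjoint M.primeCompl A P hP disj
  have hinj : Function.Injective (algebraMap R A) :=
    IsLocalization.injective A M.primeCompl_le_nonZeroDivisors
  have hQ0 : P.map (algebraMap R A) ≠ ⊥ := by
    obtain ⟨x, hxP, hx0⟩ := Submodule.exists_mem_ne_zero_of_ne_bot hP0
    intro h
    have hx : algebraMap R A x ∈ P.map (algebraMap R A) := Ideal.mem_map_of_mem _ hxP
    rw [h, Ideal.mem_bot] at hx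
    exact hx0 (hinj (by simpa using hx))
  haveI := hQp
  have hQmax : (P.map (algebraMap R A)).IsMaximal := IsPrime.to_maximal_ideal hQ0
  have hQeq : P.map (algebraMap R A) = IsLocalRing.maximalIdeal A :=
    IsLocalRing.eq_maximalIdeal hQmax
  have hPM : P = M := by
    have h1 := IsLocalization.comap_map_of_isPrime_disjoint M.primeCompl A hP disj
    rw [hQeq, Localization.AtPrime.comap_maximalIdeal] at h1
    exact h1.symm
  rw [hPM]; exact hM

/-- A nonzero radical ideal is not contained in the square of a maximal ideal. -/
lemma AD.not_le_sq (hR : AlmostDedekind R) {I : Ideal R} (hI : I ≠ ⊥)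
    (hrad : I.IsRadical) (M : MaximalSpectrum R) : ¬ I ≤ M.asIdeal ^ 2 := by
  intro hle
  haveI := hR M
  set A := Localization.AtPrime M.asIdeal with hA
  set f := algebraMap R A with hf
  have hinj : Function.Injective f :=
    IsLocalization.injective A M.asIdeal.primeCompl_le_nonZeroDivisors
  -- the image of I is a radical ideal
  have hrada : (I.map f).IsRadical := by
    intro z hz
    obtain ⟨n, hzn⟩ := hz
    rcases n with - | k
    · rw [pow_zero, ← Ideal.eq_top_iff_one] at hzn
      rw [hzn]; trivial
    obtain ⟨⟨r, s⟩, hmk⟩ := IsLocalization.mk'_surjective M.asIdeal.primeCompl z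
    have hfr : f r = z * f s := by
      rw [← hmk, IsLocalization.mk'_spec]
    have h1 : f (r ^ (k + 1)) ∈ I.map f := by
      rw [map_pow, hfr, mul_pow]
      exact Ideal.mul_mem_right _ _ hzn
    obtain ⟨⟨⟨a, ha⟩, ⟨t, ht⟩⟩, hxt⟩ :=
      (IsLocalization.mem_map_algebraMap_iff M.asIdeal.primeCompl A).mp h1
    simp only at hxt
    have hrt : r ^ (k + 1) * t = a := by
      apply hinj; rw [_root_.map_mul]; exact hxt
    have hrtI : r * t ∈ I := by
      apply hrad
      refine ⟨k + 1, ?_⟩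
      have : (r * t) ^ (k + 1) = (r ^ (k + 1) * t) * t ^ k := by ring
      rw [this, hrt]
      exact Ideal.mul_mem_right _ _ ha
    have hu : IsUnit (f s * f t) :=
      (IsLocalization.map_units A s).mul (IsLocalization.map_units A ⟨t, ht⟩)
    have hz' : (f s * f t) * z ∈ I.map f := by
      have : (f s * f t) * z = f (r * t) := by
        rw [_root_.map_mul, hfr]; ring
      rw [this]
      exact Ideal.mem_map_of_mem _ hrtI
    exact (Ideal.unit_mul_mem_iff_mem _ hu).mp hz'
  -- the image of I is nonzero
  have hIa0 : I.map f ≠ ⊥ := by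
    obtain ⟨x, hxI, hx0⟩ := Submodule.exists_mem_ne_zero_of_ne_bot hI
    intro h
    have hx : f x ∈ I.map f := Ideal.mem_map_of_mem _ hxI
    rw [h, Ideal.mem_bot] at hx
    exact hx0 (hinj (by simpa using hx))
  obtain ⟨ϖ, hϖ⟩ := IsDiscreteValuationRing.exists_irreducible A
  obtain ⟨n, hn⟩ := IsDiscreteValuationRing.ideal_eq_span_pow_irreducible hIa0 hϖ
  have hmax : IsLocalRing.maximalIdeal A = Ideal.span {ϖ} :=
    (IsDiscreteValuationRing.irreducible_iff_uniformizer ϖ).mp hϖ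
  have hle2 : I.map f ≤ Ideal.span {ϖ ^ 2} := by
    calc I.map f ≤ (M.asIdeal ^ 2).map f := Ideal.map_mono hle
    _ = (M.asIdeal.map f) ^ 2 := by rw [Ideal.map_pow]
    _ = Ideal.span {ϖ ^ 2} := by
        rw [Localization.AtPrime.map_eq_maximalIdeal, hmax, Ideal.span_singleton_pow]
  rcases n with - | k
  · rw [pow_zero, Ideal.span_singleton_one] at hn
    rw [hn] at hle2
    have h1 : (1 : A) ∈ Ideal.span {ϖ ^ 2} := hle2 trivial
    obtain ⟨c, hc⟩ := Ideal.mem_span_singleton'.mp h1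
    have h2 : ϖ * (c * ϖ) = 1 := by rw [← hc]; ring
    exact hϖ.not_isUnit (IsUnit.of_mul_eq_one _ h2)
  · have hϖn : ϖ ^ (k + 1) ∈ I.map f := by
      rw [hn]; exact Ideal.subset_span rfl
    have hϖm : ϖ ∈ I.map f := hrada ⟨k + 1, hϖn⟩
    obtain ⟨c, hc⟩ := Ideal.mem_span_singleton'.mp (hle2 hϖm)
    have hcan : ϖ * (c * ϖ) = ϖ * 1 := by linear_combination hc
    have h3 : c * ϖ = 1 := mul_left_cancel₀ hϖ.ne_zero hcan
    exact hϖ.not_isUnit (IsUnit.of_mul_eq_one _ (by rw [mul_comm] at h3; exact h3))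

end Aux

section Top

variable {R : Type*} [CommRing R] [IsDomain R]

open Ideal TopologicalSpace

lemma invTop.basic_open {J : Ideal R} (hJ : J.FG) :
    @IsOpen _ (invTop R) {M : MaximalSpectrum R | J ≤ M.asIdeal} :=
  TopologicalSpace.isOpen_generateFrom_of_mem ⟨J, hJ, rfl⟩

/-- `{M | b ∉ M}` is open in the inverse topology. -/
lemma invTop.compl_open (b : R) :
    @IsOpen _ (invTop R) {M : MaximalSpectrum R | b ∉ M.asIdeal} := by
  letI := invTop R
  show IsOpen {M : MaximalSpectrum R | b ∉ M.asIdeal}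
  rw [isOpen_iff_forall_mem_open]
  intro M hM
  obtain ⟨c, m, hm, hcm⟩ := M.isMaximal.exists_inv hM
  refine ⟨{N : MaximalSpectrum R | Ideal.span {m} ≤ N.asIdeal}, ?_, ?_, ?_⟩
  · intro N hN hbN
    have hmN : m ∈ N.asIdeal := hN (Ideal.subset_span rfl)
    have : (1 : R) ∈ N.asIdeal := by
      rw [← hcm]
      exact N.asIdeal.add_mem (N.asIdeal.mul_mem_left c hbN) hmN
    exact N.isMaximal.ne_top ((Ideal.eq_top_iff_one _).mpr this)
  · exact invTop.basic_open ⟨{m}, by simp⟩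
  · exact Ideal.span_le.mpr (Set.singleton_subset_iff.mpr hm)

/-- `V(a) ∩ Max R` is compact in the inverse topology. -/
lemma invTop.compact_V (hR : AlmostDedekind R) {a : R} (ha : a ≠ 0) :
    @IsCompact _ (invTop R) {M : MaximalSpectrum R | a ∈ M.asIdeal} := by
  letI := invTop R
  show IsCompact {M : MaximalSpectrum R | a ∈ M.asIdeal}
  rw [isCompact_iff_ultrafilter_le_nhds]
  intro U hU
  set P : Ideal R :=
    { carrier := {f | {M : MaximalSpectrum R | f ∈ M.asIdeal} ∈ U},
      add_mem' := fun {x y} hx hy => Filter.mem_of_superset (Filter.inter_mem hx hy)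
        (fun M hM => M.asIdeal.add_mem hM.1 hM.2),
      zero_mem' := Filter.mem_of_superset Filter.univ_mem
        (fun M _ => M.asIdeal.zero_mem),
      smul_mem' := fun c x hx => Filter.mem_of_superset hx
        (fun M hM => M.asIdeal.mul_mem_left c hM) } with hPdef
  have hmemP : ∀ x : R, x ∈ P ↔ {M : MaximalSpectrum R | x ∈ M.asIdeal} ∈ U := fun x => Iff.rfl
  have hPprime : P.IsPrime := by
    constructor
    · intro h
      have h1 : (1 : R) ∈ P := by rw [h]; trivial
      rw [hmemP] at h1
      have : {M : MaximalSpectrum R | (1:R) ∈ M.asIdeal} = (∅ : Set (MaximalSpectrum R)) := by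
        ext M
        simp only [Set.mem_setOf_eq, Set.mem_empty_iff_false, iff_false]
        exact fun hM => M.isMaximal.ne_top ((Ideal.eq_top_iff_one _).mpr hM)
      rw [this] at h1
      exact Filter.empty_notMem (U : Filter (MaximalSpectrum R)) h1
    · intro x y hxy
      rw [hmemP] at hxy
      have : {M : MaximalSpectrum R | x * y ∈ M.asIdeal} =
          {M : MaximalSpectrum R | x ∈ M.asIdeal} ∪ {M : MaximalSpectrum R | y ∈ M.asIdeal} := by
        ext M
        simp only [Set.mem_setOf_eq, Set.mem_union]
        exact ⟨fun h => M.isMaximal.isPrime.mem_or_mem h,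
          fun h => h.elim (M.asIdeal.mul_mem_right y) (M.asIdeal.mul_mem_left x)⟩
      rw [this, Ultrafilter.union_mem_iff] at hxy
      exact hxy.imp (fun h => (hmemP x).mpr h) (fun h => (hmemP y).mpr h)
  have haP : a ∈ P := (hmemP a).mpr (Filter.le_principal_iff.mp hU)
  have hP0 : P ≠ ⊥ := fun h => ha (by rwa [h, Ideal.mem_bot] at haP)
  have hPmax : P.IsMaximal := AD.isMaximal_of_prime hR hPprime hP0
  refine ⟨⟨P, hPmax⟩, haP, ?_⟩
  have : invTop R = TopologicalSpace.generateFrom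
      {s | ∃ J : Ideal R, J.FG ∧ s = {M : MaximalSpectrum R | J ≤ M.asIdeal}} := rfl
  show (U : Filter (MaximalSpectrum R)) ≤ @nhds _ (TopologicalSpace.generateFrom
      {s | ∃ J : Ideal R, J.FG ∧ s = {M : MaximalSpectrum R | J ≤ M.asIdeal}}) ⟨P, hPmax⟩
  rw [nhds_generateFrom]
  rw [le_iInf₂_iff]
  rintro s ⟨hxs, J, hJfg, rfl⟩
  rw [Filter.le_principal_iff]
  obtain ⟨T, hT⟩ := hJfg
  have hset : {M : MaximalSpectrum R | J ≤ M.asIdeal} =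
      ⋂ f ∈ T, {M : MaximalSpectrum R | f ∈ M.asIdeal} := by
    ext M
    simp only [Set.mem_setOf_eq, Set.mem_iInter, ← hT, Ideal.span_le]
    exact ⟨fun h x hx => h hx, fun h x hx => h x hx⟩
  rw [hset]
  rw [Filter.biInter_finset_mem]
  intro f hf
  have hfP : f ∈ P := hxs (by rw [← hT]; exact Ideal.subset_span hf)
  exact (hmemP f).mp hfP

end Top


/-- Let `R` be an almost Dedekind domain, `I` a nonzero radical ideal and `ν M` the
exponent with `I R_M = (M R_M)^(ν M)`.  The following are equivalent:
(i) `ν` is continuous (inverse topology on `Max(R)`, discrete topology on `ℤ`);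
(ii) `V(I) ∩ Max(R)` is clopen in the inverse topology;
(iii) `I` is the radical of a finitely generated ideal. -/
theorem stmt10 {R : Type*} [CommRing R] [IsDomain R] (hR : AlmostDedekind R)
    (I : Ideal R) (hI : I ≠ ⊥) (hrad : I.IsRadical)
    (ν : MaximalSpectrum R → ℤ)
    (hν : ∀ M : MaximalSpectrum R, 0 ≤ ν M ∧ I ≤ M.asIdeal ^ (ν M).toNat ∧
      ¬ I ≤ M.asIdeal ^ ((ν M).toNat + 1)) :
    (@Continuous _ _ (invTop R) ⊥ ν ↔
      @IsClopen _ (invTop R) {M : MaximalSpectrum R | I ≤ M.asIdeal}) ∧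
    (@IsClopen _ (invTop R) {M : MaximalSpectrum R | I ≤ M.asIdeal} ↔
      ∃ J : Ideal R, J.FG ∧ I = J.radical) := by
  classical
  letI := invTop R
  letI : TopologicalSpace ℤ := ⊥
  haveI : DiscreteTopology ℤ := ⟨rfl⟩
  have hν1 : ∀ M : MaximalSpectrum R, I ≤ M.asIdeal → ν M = 1 := by
    intro M hM
    obtain ⟨h0, h1, h2⟩ := hν M
    have hne : (ν M).toNat ≠ 0 := by
      intro h
      rw [h, zero_add, pow_one] at h2
      exact h2 hM
    have hlt : (ν M).toNat < 2 := by
      by_contra h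
      push_neg at h
      exact AD.not_le_sq hR hI hrad M (h1.trans (Ideal.pow_le_pow_right h))
    have := Int.toNat_of_nonneg h0
    omega
  have hν0 : ∀ M : MaximalSpectrum R, ¬ I ≤ M.asIdeal → ν M = 0 := by
    intro M hM
    obtain ⟨h0, h1, h2⟩ := hν M
    have hz : (ν M).toNat = 0 := by
      by_contra h
      exact hM (h1.trans (Ideal.pow_le_self h))
    have := Int.toNat_of_nonneg h0
    omega
  have hiff : ∀ M : MaximalSpectrum R, I ≤ M.asIdeal ↔ ν M = 1 := by
    intro M
    refine ⟨hν1 M, fun h => ?_⟩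
    by_contra hM
    rw [hν0 M hM] at h
    exact one_ne_zero h.symm
  set S := {M : MaximalSpectrum R | I ≤ M.asIdeal} with hSdef
  have hScompl : Sᶜ = ν ⁻¹' {0} := by
    ext M
    simp only [Set.mem_compl_iff, Set.mem_preimage, Set.mem_singleton_iff, hSdef,
      Set.mem_setOf_eq]
    constructor
    · exact hν0 M
    · intro h hM
      rw [hν1 M hM] at h
      exact one_ne_zero h
  have hSeq : S = ν ⁻¹' {1} := by
    ext M
    simp only [Set.mem_preimage, Set.mem_singleton_iff, hSdef, Set.mem_setOf_eq]
    exact hiff M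
  constructor
  · constructor
    · intro hc
      constructor
      · rw [← isOpen_compl_iff, hScompl]
        exact hc.isOpen_preimage _ (isOpen_discrete _)
      · rw [hSeq]
        exact hc.isOpen_preimage _ (isOpen_discrete _)
    · intro hcl
      rw [continuous_def]
      intro s _
      by_cases h1 : (1 : ℤ) ∈ s <;> by_cases h0 : (0 : ℤ) ∈ s
      · have : ν ⁻¹' s = Set.univ := by
          ext M
          simp only [Set.mem_preimage, Set.mem_univ, iff_true]
          by_cases hM : I ≤ M.asIdeal
          · rw [hν1 M hM]; exact h1
          · rw [hν0 M hM]; exact h0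
        rw [this]; exact isOpen_univ
      · have : ν ⁻¹' s = S := by
          ext M
          simp only [Set.mem_preimage, hSdef, Set.mem_setOf_eq]
          by_cases hM : I ≤ M.asIdeal
          · rw [hν1 M hM]; simp [h1, hM]
          · rw [hν0 M hM]; simp [h0, hM]
        rw [this]; exact hcl.2
      · have : ν ⁻¹' s = Sᶜ := by
          ext M
          simp only [Set.mem_preimage, Set.mem_compl_iff, hSdef, Set.mem_setOf_eq]
          by_cases hM : I ≤ M.asIdeal
          · rw [hν1 M hM]; simp [h1, hM]
          · rw [hν0 M hM]; simp [h0, hM]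
        rw [this]
        exact hcl.1.isOpen_compl
      · have : ν ⁻¹' s = ∅ := by
          ext M
          simp only [Set.mem_preimage, Set.mem_empty_iff_false, iff_false]
          by_cases hM : I ≤ M.asIdeal
          · rw [hν1 M hM]; exact h1
          · rw [hν0 M hM]; exact h0
        rw [this]; exact isOpen_empty
  · constructor
    · -- (ii) → (iii)
      intro hcl
      obtain ⟨a, haI, ha0⟩ := Submodule.exists_mem_ne_zero_of_ne_bot hI
      have hT : IsCompact ({M : MaximalSpectrum R | a ∈ M.asIdeal} ∩ Sᶜ) :=
        (invTop.compact_V hR ha0).inter_right hcl.2.isClosed_compl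
      have hcover : ({M : MaximalSpectrum R | a ∈ M.asIdeal} ∩ Sᶜ) ⊆
          ⋃ b : I, {M : MaximalSpectrum R | (b : R) ∉ M.asIdeal} := by
        rintro N ⟨-, hN⟩
        have hN' : ¬ I ≤ N.asIdeal := hN
        obtain ⟨b, hbI, hbN⟩ := SetLike.not_le_iff_exists.mp hN'
        exact Set.mem_iUnion.mpr ⟨⟨b, hbI⟩, hbN⟩
      obtain ⟨t, ht⟩ := hT.elim_finite_subcover
        (fun b : I => {M : MaximalSpectrum R | (b : R) ∉ M.asIdeal})
        (fun b => invTop.compl_open (b : R)) hcover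
      set s : Finset R := insert a (t.image (fun b : I => (b : R))) with hs
      refine ⟨Ideal.span (↑s : Set R), ⟨s, rfl⟩, ?_⟩
      have haJ : a ∈ Ideal.span (↑s : Set R) :=
        Ideal.subset_span (by simp [hs])
      have hJI : Ideal.span (↑s : Set R) ≤ I := by
        rw [Ideal.span_le]
        intro x hx
        rw [Finset.mem_coe, hs, Finset.mem_insert] at hx
        rcases hx with rfl | hx
        · exact haI
        · obtain ⟨b, _, rfl⟩ := Finset.mem_image.mp hx
          exact b.2
      have key : ∀ P : Ideal R, P.IsPrime → Ideal.span (↑s : Set R) ≤ P → I ≤ P := by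
        intro P hP hJP
        have hP0 : P ≠ ⊥ := by
          intro h
          have := hJP haJ
          rw [h, Ideal.mem_bot] at this
          exact ha0 this
        have hPmax := AD.isMaximal_of_prime hR hP hP0
        by_contra hIP
        have hmem : (⟨P, hPmax⟩ : MaximalSpectrum R) ∈
            ({M : MaximalSpectrum R | a ∈ M.asIdeal} ∩ Sᶜ) := ⟨hJP haJ, hIP⟩
        obtain ⟨b, hb⟩ := Set.mem_iUnion.mp (ht hmem)
        simp only [Set.mem_iUnion, Set.mem_setOf_eq] at hb
        obtain ⟨hbt, hbP⟩ := hb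
        exact hbP (hJP (Ideal.subset_span (by
          rw [Finset.mem_coe, hs, Finset.mem_insert]
          exact Or.inr (Finset.mem_image_of_mem _ hbt))))
      refine le_antisymm ?_ (hrad.radical_le_iff.mpr hJI)
      rw [Ideal.radical_eq_sInf]
      refine le_sInf ?_
      rintro P ⟨hJP, hP⟩
      exact key P hP hJP
    · -- (iii) → (ii)
      rintro ⟨J, hJfg, hIJ⟩
      have hSJ : S = {M : MaximalSpectrum R | J ≤ M.asIdeal} := by
        ext M
        simp only [hSdef, Set.mem_setOf_eq, hIJ]
        exact M.isMaximal.isPrime.isRadical.radical_le_iff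
      constructor
      · rw [← isOpen_compl_iff, isOpen_iff_forall_mem_open]
        intro N hN
        have hN' : ¬ I ≤ N.asIdeal := hN
        have hJN : ¬ J ≤ N.asIdeal := by
          intro h
          exact hN' (hIJ ▸ N.isMaximal.isPrime.isRadical.radical_le_iff.mpr h)
        obtain ⟨b, hbJ, hbN⟩ := SetLike.not_le_iff_exists.mp hJN
        obtain ⟨c, m, hm, hcm⟩ := N.isMaximal.exists_inv hbN
        refine ⟨{M : MaximalSpectrum R | Ideal.span {m} ≤ M.asIdeal}, ?_,
          invTop.basic_open ⟨{m}, by simp⟩, Ideal.span_le.mpr (by simpa using hm)⟩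
        intro M hM
        intro hIM
        have hbM : b ∈ M.asIdeal := hIM (hIJ ▸ Ideal.le_radical hbJ)
        have hmM : m ∈ M.asIdeal := hM (Ideal.subset_span rfl)
        have : (1 : R) ∈ M.asIdeal := by
          rw [← hcm]
          exact M.asIdeal.add_mem (M.asIdeal.mul_mem_left c hbM) hmM
        exact M.isMaximal.ne_top ((Ideal.eq_top_iff_one _).mpr this)
      · rw [hSJ]
        exact invTop.basic_open hJfg
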